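/- Let G be the 10×10 integer matrix with G_{ii} = −2 for all i, G_{ij} = 1 whenever {i, j} is one of the pairs {1,2}, {2,4}, {3,4}, {4,5}, {5,6}, {6,7}, {7,8}, {8,9}, {9,10}, and G_{ij} = 0 otherwise (the Gram matrix of the even unimodular lattice E₁₀(−1) of signature (1,9) attached to the T_{2,3,7} Dynkin diagram). Equip ℚ¹⁰ with the symmetric bilinear form B whose Gram matrix on the standard basis is 2G, and set E(2) = ℤ¹⁰ ⊂ ℚ¹⁰. If L is a subgroup of ℚ¹⁰ with E(2) ⊆ L, E(2) ≠ L, the quotient L/E(2) finite, and B(x, x) ∈ 2ℤ for every x ∈ L, then L is generated as an abelian group by E(2) together with the set {x ∈ L : B(x, x) = −2}. -/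

import Mathlib

open scoped BigOperators

/-- The Gram matrix of the even unimodular lattice `E₁₀(-1)` of signature `(1,9)`,
attached to the `T_{2,3,7}` Dynkin diagram (with `0`-indexed vertices: the pairs of
adjacent vertices are `{0,1}, {1,3}, {2,3}, {3,4}, {4,5}, {5,6}, {6,7}, {7,8}, {8,9}`). -/
def E10Gram (i j : Fin 10) : ℤ :=
  if i = j then -2
  else if ({i, j} : Finset (Fin 10)) ∈
      ([{0, 1}, {1, 3}, {2, 3}, {3, 4}, {4, 5}, {5, 6}, {6, 7}, {7, 8}, {8, 9}] :
        List (Finset (Fin 10))) then 1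
  else 0

/-- The bilinear form on `ℚ¹⁰` whose Gram matrix on the standard basis is `2 · E10Gram`,
i.e. the form of the lattice `E(2) = E₁₀(-1)(2)`. -/
noncomputable def BE2 (u v : Fin 10 → ℚ) : ℚ :=
  ∑ i, ∑ j, u i * v j * ((2 * E10Gram i j : ℤ) : ℚ)

/-- The lattice `E(2) = ℤ¹⁰ ⊂ ℚ¹⁰`. -/
noncomputable def E2lat : AddSubgroup (Fin 10 → ℚ) :=
  AddSubgroup.closure (Set.range fun i : Fin 10 => (Pi.single i 1 : Fin 10 → ℚ))

section Aux

theorem sum_univ_nine {β : Type*} [AddCommMonoid β] (f : Fin 9 → β) :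
    ∑ i, f i = f 0 + f 1 + f 2 + f 3 + f 4 + f 5 + f 6 + f 7 + f 8 := by
  rw [Fin.sum_univ_castSucc, Fin.sum_univ_eight]
  rfl

theorem sum_univ_ten {β : Type*} [AddCommMonoid β] (f : Fin 10 → β) :
    ∑ i, f i = f 0 + f 1 + f 2 + f 3 + f 4 + f 5 + f 6 + f 7 + f 8 + f 9 := by
  rw [Fin.sum_univ_castSucc, sum_univ_nine]
  rfl

def qf2 (u v : Fin 10 → ℤ) : ℤ := ∑ i, ∑ j, u i * v j * E10Gram i j

def qF (v : Fin 10 → ℤ) : ℤ := (-2)*(v 0*v 0+v 1*v 1+v 2*v 2+v 3*v 3+v 4*v 4+v 5*v 5+v 6*v 6+v 7*v 7+v 8*v 8+v 9*v 9) + 2*(v 0*v 1+v 1*v 3+v 2*v 3+v 3*v 4+v 4*v 5+v 5*v 6+v 6*v 7+v 7*v 8+v 8*v 9)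

def qFL (v : ℕ → ℤ) : ℤ := (-2)*(v 0*v 0+v 1*v 1+v 2*v 2+v 3*v 3+v 4*v 4+v 5*v 5+v 6*v 6+v 7*v 7+v 8*v 8+v 9*v 9) + 2*(v 0*v 1+v 1*v 3+v 2*v 3+v 3*v 4+v 4*v 5+v 5*v 6+v 6*v 7+v 7*v 8+v 8*v 9)

theorem qf2_eval (v : Fin 10 → ℤ) : qf2 v v = qF v := by
  simp only [qf2, sum_univ_ten]
  simp only [show E10Gram 0 0 = (-2) from rfl,
    show E10Gram 0 1 = (1) from rfl,
    show E10Gram 0 2 = (0) from rfl,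
    show E10Gram 0 3 = (0) from rfl,
    show E10Gram 0 4 = (0) from rfl,
    show E10Gram 0 5 = (0) from rfl,
    show E10Gram 0 6 = (0) from rfl,
    show E10Gram 0 7 = (0) from rfl,
    show E10Gram 0 8 = (0) from rfl,
    show E10Gram 0 9 = (0) from rfl,
    show E10Gram 1 0 = (1) from rfl,
    show E10Gram 1 1 = (-2) from rfl,
    show E10Gram 1 2 = (0) from rfl,
    show E10Gram 1 3 = (1) from rfl,
    show E10Gram 1 4 = (0) from rfl,
    show E10Gram 1 5 = (0) from rfl,
    show E10Gram 1 6 = (0) from rfl,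
    show E10Gram 1 7 = (0) from rfl,
    show E10Gram 1 8 = (0) from rfl,
    show E10Gram 1 9 = (0) from rfl,
    show E10Gram 2 0 = (0) from rfl,
    show E10Gram 2 1 = (0) from rfl,
    show E10Gram 2 2 = (-2) from rfl,
    show E10Gram 2 3 = (1) from rfl,
    show E10Gram 2 4 = (0) from rfl,
    show E10Gram 2 5 = (0) from rfl,
    show E10Gram 2 6 = (0) from rfl,
    show E10Gram 2 7 = (0) from rfl,
    show E10Gram 2 8 = (0) from rfl,
    show E10Gram 2 9 = (0) from rfl,
    show E10Gram 3 0 = (0) from rfl,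
    show E10Gram 3 1 = (1) from rfl,
    show E10Gram 3 2 = (1) from rfl,
    show E10Gram 3 3 = (-2) from rfl,
    show E10Gram 3 4 = (1) from rfl,
    show E10Gram 3 5 = (0) from rfl,
    show E10Gram 3 6 = (0) from rfl,
    show E10Gram 3 7 = (0) from rfl,
    show E10Gram 3 8 = (0) from rfl,
    show E10Gram 3 9 = (0) from rfl,
    show E10Gram 4 0 = (0) from rfl,
    show E10Gram 4 1 = (0) from rfl,
    show E10Gram 4 2 = (0) from rfl,
    show E10Gram 4 3 = (1) from rfl,
    show E10Gram 4 4 = (-2) from rfl,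
    show E10Gram 4 5 = (1) from rfl,
    show E10Gram 4 6 = (0) from rfl,
    show E10Gram 4 7 = (0) from rfl,
    show E10Gram 4 8 = (0) from rfl,
    show E10Gram 4 9 = (0) from rfl,
    show E10Gram 5 0 = (0) from rfl,
    show E10Gram 5 1 = (0) from rfl,
    show E10Gram 5 2 = (0) from rfl,
    show E10Gram 5 3 = (0) from rfl,
    show E10Gram 5 4 = (1) from rfl,
    show E10Gram 5 5 = (-2) from rfl,
    show E10Gram 5 6 = (1) from rfl,
    show E10Gram 5 7 = (0) from rfl,
    show E10Gram 5 8 = (0) from rfl,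
    show E10Gram 5 9 = (0) from rfl,
    show E10Gram 6 0 = (0) from rfl,
    show E10Gram 6 1 = (0) from rfl,
    show E10Gram 6 2 = (0) from rfl,
    show E10Gram 6 3 = (0) from rfl,
    show E10Gram 6 4 = (0) from rfl,
    show E10Gram 6 5 = (1) from rfl,
    show E10Gram 6 6 = (-2) from rfl,
    show E10Gram 6 7 = (1) from rfl,
    show E10Gram 6 8 = (0) from rfl,
    show E10Gram 6 9 = (0) from rfl,
    show E10Gram 7 0 = (0) from rfl,
    show E10Gram 7 1 = (0) from rfl,
    show E10Gram 7 2 = (0) from rfl,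
    show E10Gram 7 3 = (0) from rfl,
    show E10Gram 7 4 = (0) from rfl,
    show E10Gram 7 5 = (0) from rfl,
    show E10Gram 7 6 = (1) from rfl,
    show E10Gram 7 7 = (-2) from rfl,
    show E10Gram 7 8 = (1) from rfl,
    show E10Gram 7 9 = (0) from rfl,
    show E10Gram 8 0 = (0) from rfl,
    show E10Gram 8 1 = (0) from rfl,
    show E10Gram 8 2 = (0) from rfl,
    show E10Gram 8 3 = (0) from rfl,
    show E10Gram 8 4 = (0) from rfl,
    show E10Gram 8 5 = (0) from rfl,
    show E10Gram 8 6 = (0) from rfl,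
    show E10Gram 8 7 = (1) from rfl,
    show E10Gram 8 8 = (-2) from rfl,
    show E10Gram 8 9 = (1) from rfl,
    show E10Gram 9 0 = (0) from rfl,
    show E10Gram 9 1 = (0) from rfl,
    show E10Gram 9 2 = (0) from rfl,
    show E10Gram 9 3 = (0) from rfl,
    show E10Gram 9 4 = (0) from rfl,
    show E10Gram 9 5 = (0) from rfl,
    show E10Gram 9 6 = (0) from rfl,
    show E10Gram 9 7 = (0) from rfl,
    show E10Gram 9 8 = (1) from rfl,
    show E10Gram 9 9 = (-2) from rfl]
  unfold qF
  ring

theorem qF_sub (v d : Fin 10 → ℤ) :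
    qF (fun i => v i + 2 * d i) = qF v + 4 * ((-2)*((v 0 * d 0 + d 0 * d 0)+(v 1 * d 1 + d 1 * d 1)+(v 2 * d 2 + d 2 * d 2)+(v 3 * d 3 + d 3 * d 3)+(v 4 * d 4 + d 4 * d 4)+(v 5 * d 5 + d 5 * d 5)+(v 6 * d 6 + d 6 * d 6)+(v 7 * d 7 + d 7 * d 7)+(v 8 * d 8 + d 8 * d 8)+(v 9 * d 9 + d 9 * d 9)) + ((v 0 * d 1 + d 0 * v 1 + 2 * d 0 * d 1)+(v 1 * d 3 + d 1 * v 3 + 2 * d 1 * d 3)+(v 2 * d 3 + d 2 * v 3 + 2 * d 2 * d 3)+(v 3 * d 4 + d 3 * v 4 + 2 * d 3 * d 4)+(v 4 * d 5 + d 4 * v 5 + 2 * d 4 * d 5)+(v 5 * d 6 + d 5 * v 6 + 2 * d 5 * d 6)+(v 6 * d 7 + d 6 * v 7 + 2 * d 6 * d 7)+(v 7 * d 8 + d 7 * v 8 + 2 * d 7 * d 8)+(v 8 * d 9 + d 8 * v 9 + 2 * d 8 * d 9))) := by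
  unfold qF
  ring

set_option maxHeartbeats 2000000 in
def witList : List ℕ := [
  586406201480,
  586406201480,
  586406201480,
  586406201480,
  586406201480,
  586406201223,
  586406201208,
  586406201207,
  586406201480,
  586406197383,
  586406201480,
  586406201480,
  586406201480,
  586406197127,
  586406201480,
  586406201480,
  586406201480,
  586406135943,
  586406135928,
  586406135927,
  586406135688,
  586406201480,
  586406201480,
  586406201480,
  586406201480,
  586406131847,
  586406201480,
  586406201480,
  586406201480,
  586406131591,
  586406201480,
  586406201480,
  586406201480,
  586405152903,
  586405152888,
  586405152887,
  586405152648,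
  586406201480,
  586406201480,
  586406201480,
  586405148808,
  586406201480,
  586405148792,
  586405148791,
  586405148552,
  586406201480,
  586405148536,
  586405148535,
  586406201480,
  586405087367,
  586405087352,
  586405087351,
  586405087112,
  586406201480,
  586406201480,
  586406201480,
  586406201480,
  586405083271,
  586406201480,
  586406201480,
  586406201480,
  586405083015,
  586406201480,
  586406201480,
  586406201480,
  586389424263,
  586389424248,
  586389424247,
  586389424008,
  586406201480,
  586406201480,
  586406201480,
  586389420168,
  586406201480,
  586389420152,
  586389420151,
  586389419912,
  586406201480,
  586389419896,
  586389419895,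
  586389358728,
  586406201480,
  586406201480,
  586406201480,
  586406201480,
  586389350247,
  586389350264,
  586389350263,
  586389354632,
  586406201480,
  586389354616,
  586389354615,
  586389354376,
  586406201480,
  586389354360,
  586389354359,
  586406201480,
  586388375687,
  586388375672,
  586388375671,
  586388375432,
  586406201480,
  586406201480,
  586406201480,
  586388371592,
  586406201480,
  586388371576,
  586388371575,
  586388371336,
  586406201480,
  586388371320,
  586388371319,
  586406201480,
  586388310151,
  586388310136,
  586388310135,
  586388309896,
  586406201480,
  586406201480,
  586406201480,
  586406201480,
  586388306055,
  586406201480,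
  586406201480,
  586406201480,
  586388305799,
  586406201480,
  586406201480,
  586406201480,
  586137766023,
  586137766008,
  586137766007,
  586137765768,
  586406201480,
  586406201480,
  586406201480,
  586137761928,
  586406201480,
  586137761912,
  586137761911,
  586137761672,
  586406201480,
  586137761656,
  586137761655,
  586137700488,
  586406201480,
  586406201480,
  586406201480,
  586406201480,
  586137692007,
  586137692024,
  586137692023,
  586137696392,
  586406201480,
  586137696376,
  586137696375,
  586137696136,
  586406201480,
  586137696120,
  586137696119,
  586136717448,
  586406201480,
  586406201480,
  586406201480,
  586406201480,
  586136577895,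
  586136577912,
  586136577911,
  586406201480,
  586136573543,
  586406201480,
  586406201480,
  586406201480,
  586136573799,
  586406201480,
  586406201480,
  586136651912,
  586406201480,
  586406201480,
  586406201480,
  586406201480,
  586136643431,
  586136643448,
  586136643447,
  586136647816,
  586406201480,
  586136647800,
  586136647799,
  586136647560,
  586406201480,
  586136647544,
  586136647543,
  586406201480,
  586120988807,
  586120988792,
  586120988791,
  586120988552,
  586406201480,
  586406201480,
  586406201480,
  586120984712,
  586406201480,
  586120984696,
  586120984695,
  586120984456,
  586406201480,
  586120984440,
  586120984439,
  586120923272,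
  586406201480,
  586406201480,
  586406201480,
  586406201480,
  586120914791,
  586120914808,
  586120914807,
  586120919176,
  586406201480,
  586120919160,
  586120919159,
  586120918920,
  586406201480,
  586120918904,
  586120918903,
  586406201480,
  586119940231,
  586119940216,
  586119940215,
  586119939976,
  586406201480,
  586406201480,
  586406201480,
  586119936136,
  586406201480,
  586119936120,
  586119936119,
  586119935880,
  586406201480,
  586119935864,
  586119935863,
  586406201480,
  586119874695,
  586119874680,
  586119874679,
  586119874440,
  586406201480,
  586406201480,
  586406201480,
  586406201480,
  586119870599,
  586406201480,
  586406201480,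
  586406201480,
  586119870343,
  586406201480,
  586406201480,
  586406201480,
  582111234183,
  582111234168,
  582111234167,
  582111233928,
  586406201480,
  586406201480,
  586406201480,
  582111230088,
  586406201480,
  582111230072,
  582111230071,
  582111229832,
  586406201480,
  582111229816,
  582111229815,
  582111168648,
  586406201480,
  586406201480,
  586406201480,
  586406201480,
  582111160167,
  582111160184,
  582111160183,
  582111164552,
  586406201480,
  582111164536,
  582111164535,
  582111164296,
  586406201480,
  582111164280,
  582111164279,
  582110185608,
  586406201480,
  586406201480,
  586406201480,
  586406201480,
  582110046055,
  582110046072,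
  582110046071,
  586406201480,
  582110041703,
  586406201480,
  586406201480,
  586406201480,
  582110041959,
  586406201480,
  586406201480,
  582110120072,
  586406201480,
  586406201480,
  586406201480,
  586406201480,
  582110111591,
  582110111608,
  582110111607,
  582110115976,
  586406201480,
  582110115960,
  582110115959,
  582110115720,
  586406201480,
  582110115704,
  582110115703,
  582094456968,
  586406201480,
  586406201480,
  586406201480,
  586406201480,
  582092220263,
  582092220280,
  582092220279,
  586406201480,
  582092215911,
  586406201480,
  586406201480,
  586406201480,
  582092216167,
  586406201480,
  586406201480,
  586406201480,
  582092146279,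
  582092146262,
  582092146263,
  435490596166,
  586406201480,
  586406201480,
  586406201480,
  586406201480,
  582092150375,
  586406201480,
  586406201480,
  586406201480,
  582092150631,
  586406201480,
  586406201480,
  582093408392,
  586406201480,
  586406201480,
  586406201480,
  586406201480,
  582093268839,
  582093268856,
  582093268855,
  586406201480,
  582093264487,
  586406201480,
  586406201480,
  586406201480,
  582093264743,
  586406201480,
  586406201480,
  582093342856,
  586406201480,
  586406201480,
  586406201480,
  586406201480,
  582093334375,
  582093334392,
  582093334391,
  582093338760,
  586406201480,
  582093338744,
  582093338743,
  582093338504,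
  586406201480,
  582093338488,
  582093338487,
  586406201480,
  581842798727,
  581842798712,
  581842798711,
  581842798472,
  586406201480,
  586406201480,
  586406201480,
  581842794632,
  586406201480,
  581842794616,
  581842794615,
  581842794376,
  586406201480,
  581842794360,
  581842794359,
  581842733192,
  586406201480,
  586406201480,
  586406201480,
  586406201480,
  581842724711,
  581842724728,
  581842724727,
  581842729096,
  586406201480,
  581842729080,
  581842729079,
  581842728840,
  586406201480,
  581842728824,
  581842728823,
  581841750152,
  586406201480,
  586406201480,
  586406201480,
  586406201480,
  581841610599,
  581841610616,
  581841610615,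
  586406201480,
  581841606247,
  586406201480,
  586406201480,
  586406201480,
  581841606503,
  586406201480,
  586406201480,
  581841684616,
  586406201480,
  586406201480,
  586406201480,
  586406201480,
  581841676135,
  581841676152,
  581841676151,
  581841680520,
  586406201480,
  581841680504,
  581841680503,
  581841680264,
  586406201480,
  581841680248,
  581841680247,
  586406201480,
  581826021511,
  581826021496,
  581826021495,
  581826021256,
  586406201480,
  586406201480,
  586406201480,
  581826017416,
  586406201480,
  581826017400,
  581826017399,
  581826017160,
  586406201480,
  581826017144,
  581826017143,
  581825955976,
  586406201480,
  586406201480,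
  586406201480,
  586406201480,
  581825947495,
  581825947512,
  581825947511,
  581825951880,
  586406201480,
  581825951864,
  581825951863,
  581825951624,
  586406201480,
  581825951608,
  581825951607,
  586406201480,
  581824972935,
  581824972920,
  581824972919,
  581824972680,
  586406201480,
  586406201480,
  586406201480,
  581824968840,
  586406201480,
  581824968824,
  581824968823,
  581824968584,
  586406201480,
  581824968568,
  581824968567,
  586406201480,
  581824907399,
  581824907384,
  581824907383,
  581824907144,
  586406201480,
  586406201480,
  586406201480,
  586406201480,
  581824903303,
  586406201480,
  586406201480,
  586406201480,
  581824903047,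
  586406201480,
  586406201480,
  586406201480,
  517686724743,
  517686724728,
  517686724727,
  517686724488,
  586406201480,
  586406201480,
  586406201480,
  517686720648,
  586406201480,
  517686720632,
  517686720631,
  517686720392,
  586406201480,
  517686720376,
  517686720375,
  517686659208,
  586406201480,
  586406201480,
  586406201480,
  586406201480,
  517686650727,
  517686650744,
  517686650743,
  517686655112,
  586406201480,
  517686655096,
  517686655095,
  517686654856,
  586406201480,
  517686654840,
  517686654839,
  517685676168,
  586406201480,
  586406201480,
  586406201480,
  586406201480,
  517685536615,
  517685536632,
  517685536631,
  586406201480,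
  517685532263,
  586406201480,
  586406201480,
  586406201480,
  517685532519,
  586406201480,
  586406201480,
  517685610632,
  586406201480,
  586406201480,
  586406201480,
  586406201480,
  517685602151,
  517685602168,
  517685602167,
  517685606536,
  586406201480,
  517685606520,
  517685606519,
  517685606280,
  586406201480,
  517685606264,
  517685606263,
  517669947528,
  586406201480,
  586406201480,
  586406201480,
  586406201480,
  517667710823,
  517667710840,
  517667710839,
  586406201480,
  517667706471,
  586406201480,
  586406201480,
  586406201480,
  517667706727,
  586406201480,
  586406201480,
  586406201480,
  517667636839,
  517667636822,
  517667636823,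
  517094974790,
  586406201480,
  586406201480,
  586406201480,
  586406201480,
  517667640935,
  586406201480,
  586406201480,
  586406201480,
  517667641191,
  586406201480,
  586406201480,
  517668898952,
  586406201480,
  586406201480,
  586406201480,
  586406201480,
  517668759399,
  517668759416,
  517668759415,
  586406201480,
  517668755047,
  586406201480,
  586406201480,
  586406201480,
  517668755303,
  586406201480,
  586406201480,
  517668833416,
  586406201480,
  586406201480,
  586406201480,
  586406201480,
  517668824935,
  517668824952,
  517668824951,
  517668829320,
  586406201480,
  517668829304,
  517668829303,
  517668829064,
  586406201480,
  517668829048,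
  517668829047,
  517418289288,
  586406201480,
  586406201480,
  586406201480,
  586406201480,
  517382498151,
  517382498168,
  517382498167,
  586406201480,
  517382493799,
  586406201480,
  586406201480,
  586406201480,
  517382494055,
  586406201480,
  586406201480,
  586406201480,
  517382424167,
  517382424150,
  517382424151,
  517380187462,
  586406201480,
  586406201480,
  586406201480,
  586406201480,
  517382428263,
  586406201480,
  586406201480,
  586406201480,
  517382428519,
  586406201480,
  586406201480,
  586406201480,
  517381310055,
  517381310038,
  517381310039,
  517381301574,
  586406201480,
  586406201480,
  586406201480,
  517381305926,
  586406201480,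
  517381305942,
  517381305943,
  517381305670,
  586406201480,
  517381305686,
  517381305687,
  586406201480,
  517381375591,
  517381375574,
  517381375575,
  517381236038,
  586406201480,
  586406201480,
  586406201480,
  586406201480,
  517381379687,
  586406201480,
  586406201480,
  586406201480,
  517381379943,
  586406201480,
  586406201480,
  517401512072,
  586406201480,
  586406201480,
  586406201480,
  586406201480,
  517399275367,
  517399275384,
  517399275383,
  586406201480,
  517399271015,
  586406201480,
  586406201480,
  586406201480,
  517399271271,
  586406201480,
  586406201480,
  586406201480,
  517399201383,
  517399201366,
  517399201367,
  517363410246,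
  586406201480,
  586406201480,
  586406201480,
  586406201480,
  517399205479,
  586406201480,
  586406201480,
  586406201480,
  517399205735,
  586406201480,
  586406201480,
  517400463496,
  586406201480,
  586406201480,
  586406201480,
  586406201480,
  517400323943,
  517400323960,
  517400323959,
  586406201480,
  517400319591,
  586406201480,
  586406201480,
  586406201480,
  517400319847,
  586406201480,
  586406201480,
  517400397960,
  586406201480,
  586406201480,
  586406201480,
  586406201480,
  517400389479,
  517400389496,
  517400389495,
  517400393864,
  586406201480,
  517400393848,
  517400393847,
  517400393608,
  586406201480,
  517400393592,
  517400393591,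
  586406201480,
  513391757447,
  513391757432,
  513391757431,
  513391757192,
  586406201480,
  586406201480,
  586406201480,
  513391753352,
  586406201480,
  513391753336,
  513391753335,
  513391753096,
  586406201480,
  513391753080,
  513391753079,
  513391691912,
  586406201480,
  586406201480,
  586406201480,
  586406201480,
  513391683431,
  513391683448,
  513391683447,
  513391687816,
  586406201480,
  513391687800,
  513391687799,
  513391687560,
  586406201480,
  513391687544,
  513391687543,
  513390708872,
  586406201480,
  586406201480,
  586406201480,
  586406201480,
  513390569319,
  513390569336,
  513390569335,
  586406201480,
  513390564967,
  586406201480,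
  586406201480,
  586406201480,
  513390565223,
  586406201480,
  586406201480,
  513390643336,
  586406201480,
  586406201480,
  586406201480,
  586406201480,
  513390634855,
  513390634872,
  513390634871,
  513390639240,
  586406201480,
  513390639224,
  513390639223,
  513390638984,
  586406201480,
  513390638968,
  513390638967,
  513374980232,
  586406201480,
  586406201480,
  586406201480,
  586406201480,
  513372743527,
  513372743544,
  513372743543,
  586406201480,
  513372739175,
  586406201480,
  586406201480,
  586406201480,
  513372739431,
  586406201480,
  586406201480,
  586406201480,
  513372669543,
  513372669526,
  513372669527,
  504210072902,
  586406201480,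
  586406201480,
  586406201480,
  586406201480,
  513372673639,
  586406201480,
  586406201480,
  586406201480,
  513372673895,
  586406201480,
  586406201480,
  513373931656,
  586406201480,
  586406201480,
  586406201480,
  586406201480,
  513373792103,
  513373792120,
  513373792119,
  586406201480,
  513373787751,
  586406201480,
  586406201480,
  586406201480,
  513373788007,
  586406201480,
  586406201480,
  513373866120,
  586406201480,
  586406201480,
  586406201480,
  586406201480,
  513373857639,
  513373857656,
  513373857655,
  513373862024,
  586406201480,
  513373862008,
  513373862007,
  513373861768,
  586406201480,
  513373861752,
  513373861751,
  586406201480,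
  513123321991,
  513123321976,
  513123321975,
  513123321736,
  586406201480,
  586406201480,
  586406201480,
  513123317896,
  586406201480,
  513123317880,
  513123317879,
  513123317640,
  586406201480,
  513123317624,
  513123317623,
  513123256456,
  586406201480,
  586406201480,
  586406201480,
  586406201480,
  513123247975,
  513123247992,
  513123247991,
  513123252360,
  586406201480,
  513123252344,
  513123252343,
  513123252104,
  586406201480,
  513123252088,
  513123252087,
  513122273416,
  586406201480,
  586406201480,
  586406201480,
  586406201480,
  513122133863,
  513122133880,
  513122133879,
  586406201480,
  513122129511,
  586406201480,
  586406201480,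
  586406201480,
  513122129767,
  586406201480,
  586406201480,
  513122207880,
  586406201480,
  586406201480,
  586406201480,
  586406201480,
  513122199399,
  513122199416,
  513122199415,
  513122203784,
  586406201480,
  513122203768,
  513122203767,
  513122203528,
  586406201480,
  513122203512,
  513122203511,
  586406201480,
  513106544775,
  513106544760,
  513106544759,
  513106544520,
  586406201480,
  586406201480,
  586406201480,
  513106540680,
  586406201480,
  513106540664,
  513106540663,
  513106540424,
  586406201480,
  513106540408,
  513106540407,
  513106479240,
  586406201480,
  586406201480,
  586406201480,
  586406201480,
  513106470759,
  513106470776,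
  513106470775,
  513106475144,
  586406201480,
  513106475128,
  513106475127,
  513106474888,
  586406201480,
  513106474872,
  513106474871,
  586406201480,
  513105496199,
  513105496184,
  513105496183,
  513105495944,
  586406201480,
  586406201480,
  586406201480,
  513105492104,
  586406201480,
  513105492088,
  513105492087,
  513105491848,
  586406201480,
  513105491832,
  513105491831,
  586406201480,
  513105430663,
  513105430648,
  513105430647,
  513105430408,
  586406201480,
  586406201480,
  586406201480,
  586406201480,
  513105426567,
  586406201480,
  586406201480,
  586406201480,
  513105426311,
  586406201480,
  586406201480]

def checkPair (p : ℕ × ℕ) : Bool :=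
  ((p.1 == 0) ||
    (!(qFL (fun i => ((p.1 / 2^i) % 2 : ℕ)) % 4 == 0)) ||
    (((List.range 10).all fun i => ((((p.2 / 16^i) % 16 : ℕ) - 8 : ℤ) - ((p.1 / 2^i) % 2 : ℕ)) % 2 == 0) &&
      (qFL (fun i => (((p.2 / 16^i) % 16 : ℕ) - 8 : ℤ)) == -4)))

set_option maxRecDepth 20000 in
set_option maxHeartbeats 4000000 in
theorem keyL : (witList.zipIdx.map Prod.swap).all checkPair = true := by decide

set_option maxRecDepth 20000 in
set_option maxHeartbeats 1000000 in
theorem witList_length : witList.length = 1024 := by decide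

theorem Gsym : ∀ i j : Fin 10, E10Gram i j = E10Gram j i := by decide

def HList : List (List ℤ) := [
  [4, 9, 7, 14, 12, 10, 8, 6, 4, 2],
  [9, 18, 14, 28, 24, 20, 16, 12, 8, 4],
  [7, 14, 10, 21, 18, 15, 12, 9, 6, 3],
  [14, 28, 21, 42, 36, 30, 24, 18, 12, 6],
  [12, 24, 18, 36, 30, 25, 20, 15, 10, 5],
  [10, 20, 15, 30, 25, 20, 16, 12, 8, 4],
  [8, 16, 12, 24, 20, 16, 12, 9, 6, 3],
  [6, 12, 9, 18, 15, 12, 9, 6, 4, 2],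
  [4, 8, 6, 12, 10, 8, 6, 4, 2, 1],
  [2, 4, 3, 6, 5, 4, 3, 2, 1, 0]]

def Hmat : Fin 10 → Fin 10 → ℤ := fun i j => (HList.getD i.1 []).getD j.1 0

theorem HG_inv : ∀ i k : Fin 10, (∑ j, Hmat i j * E10Gram j k) = if i = k then 1 else 0 := by
  decide

end Aux


section Glue

set_option maxHeartbeats 1600000 in
theorem key (b : Fin 10 → ℤ) (hb : ∀ i, b i = 0 ∨ b i = 1) (hb0 : ¬ ∀ i, b i = 0)
    (h4 : qF b % 4 = 0) :
    ∃ u : Fin 10 → ℤ, (∀ i, (u i - b i) % 2 = 0) ∧ qF u = -4 := by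
  obtain ⟨c0, hc0, hd0⟩ : ∃ c : ℕ, ((c : ℤ) = b 0 ∧ c ≤ 1) := by
    rcases hb 0 with h | h
    · exact ⟨0, by rw [h]; simp, by omega⟩
    · exact ⟨1, by rw [h]; simp, by omega⟩
  obtain ⟨c1, hc1, hd1⟩ : ∃ c : ℕ, ((c : ℤ) = b 1 ∧ c ≤ 1) := by
    rcases hb 1 with h | h
    · exact ⟨0, by rw [h]; simp, by omega⟩
    · exact ⟨1, by rw [h]; simp, by omega⟩
  obtain ⟨c2, hc2, hd2⟩ : ∃ c : ℕ, ((c : ℤ) = b 2 ∧ c ≤ 1) := by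
    rcases hb 2 with h | h
    · exact ⟨0, by rw [h]; simp, by omega⟩
    · exact ⟨1, by rw [h]; simp, by omega⟩
  obtain ⟨c3, hc3, hd3⟩ : ∃ c : ℕ, ((c : ℤ) = b 3 ∧ c ≤ 1) := by
    rcases hb 3 with h | h
    · exact ⟨0, by rw [h]; simp, by omega⟩
    · exact ⟨1, by rw [h]; simp, by omega⟩
  obtain ⟨c4, hc4, hd4⟩ : ∃ c : ℕ, ((c : ℤ) = b 4 ∧ c ≤ 1) := by
    rcases hb 4 with h | h
    · exact ⟨0, by rw [h]; simp, by omega⟩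
    · exact ⟨1, by rw [h]; simp, by omega⟩
  obtain ⟨c5, hc5, hd5⟩ : ∃ c : ℕ, ((c : ℤ) = b 5 ∧ c ≤ 1) := by
    rcases hb 5 with h | h
    · exact ⟨0, by rw [h]; simp, by omega⟩
    · exact ⟨1, by rw [h]; simp, by omega⟩
  obtain ⟨c6, hc6, hd6⟩ : ∃ c : ℕ, ((c : ℤ) = b 6 ∧ c ≤ 1) := by
    rcases hb 6 with h | h
    · exact ⟨0, by rw [h]; simp, by omega⟩
    · exact ⟨1, by rw [h]; simp, by omega⟩
  obtain ⟨c7, hc7, hd7⟩ : ∃ c : ℕ, ((c : ℤ) = b 7 ∧ c ≤ 1) := by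
    rcases hb 7 with h | h
    · exact ⟨0, by rw [h]; simp, by omega⟩
    · exact ⟨1, by rw [h]; simp, by omega⟩
  obtain ⟨c8, hc8, hd8⟩ : ∃ c : ℕ, ((c : ℤ) = b 8 ∧ c ≤ 1) := by
    rcases hb 8 with h | h
    · exact ⟨0, by rw [h]; simp, by omega⟩
    · exact ⟨1, by rw [h]; simp, by omega⟩
  obtain ⟨c9, hc9, hd9⟩ : ∃ c : ℕ, ((c : ℤ) = b 9 ∧ c ≤ 1) := by
    rcases hb 9 with h | h
    · exact ⟨0, by rw [h]; simp, by omega⟩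
    · exact ⟨1, by rw [h]; simp, by omega⟩
  set m : ℕ := c0 + 2*c1 + 4*c2 + 8*c3 + 16*c4 + 32*c5 + 64*c6 + 128*c7 + 256*c8 + 512*c9
    with hmdef
  have hmlt : m < 1024 := by omega
  obtain ⟨d0, d1, d2, d3, d4, d5, d6, d7, d8, d9⟩ :
      (m / 1) % 2 = c0 ∧ (m / 2) % 2 = c1 ∧ (m / 4) % 2 = c2 ∧ (m / 8) % 2 = c3 ∧ (m / 16) % 2 = c4 ∧ (m / 32) % 2 = c5 ∧ (m / 64) % 2 = c6 ∧ (m / 128) % 2 = c7 ∧ (m / 256) % 2 = c8 ∧ (m / 512) % 2 = c9 := by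
    refine ⟨?_, ?_, ?_, ?_, ?_, ?_, ?_, ?_, ?_, ?_⟩ <;> omega
  have e0 : (((m / 2^0) % 2 : ℕ) : ℤ) = b 0 := by
    have hp : (2:ℕ)^0 = 1 := by norm_num
    rw [hp, d0, hc0]
  have e1 : (((m / 2^1) % 2 : ℕ) : ℤ) = b 1 := by
    have hp : (2:ℕ)^1 = 2 := by norm_num
    rw [hp, d1, hc1]
  have e2 : (((m / 2^2) % 2 : ℕ) : ℤ) = b 2 := by
    have hp : (2:ℕ)^2 = 4 := by norm_num
    rw [hp, d2, hc2]
  have e3 : (((m / 2^3) % 2 : ℕ) : ℤ) = b 3 := by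
    have hp : (2:ℕ)^3 = 8 := by norm_num
    rw [hp, d3, hc3]
  have e4 : (((m / 2^4) % 2 : ℕ) : ℤ) = b 4 := by
    have hp : (2:ℕ)^4 = 16 := by norm_num
    rw [hp, d4, hc4]
  have e5 : (((m / 2^5) % 2 : ℕ) : ℤ) = b 5 := by
    have hp : (2:ℕ)^5 = 32 := by norm_num
    rw [hp, d5, hc5]
  have e6 : (((m / 2^6) % 2 : ℕ) : ℤ) = b 6 := by
    have hp : (2:ℕ)^6 = 64 := by norm_num
    rw [hp, d6, hc6]
  have e7 : (((m / 2^7) % 2 : ℕ) : ℤ) = b 7 := by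
    have hp : (2:ℕ)^7 = 128 := by norm_num
    rw [hp, d7, hc7]
  have e8 : (((m / 2^8) % 2 : ℕ) : ℤ) = b 8 := by
    have hp : (2:ℕ)^8 = 256 := by norm_num
    rw [hp, d8, hc8]
  have e9 : (((m / 2^9) % 2 : ℕ) : ℤ) = b 9 := by
    have hp : (2:ℕ)^9 = 512 := by norm_num
    rw [hp, d9, hc9]
  have hbi : ∀ i : Fin 10, (((m / 2^(i.1)) % 2 : ℕ) : ℤ) = b i := by
    intro i
    fin_cases i
    exacts [e0, e1, e2, e3, e4, e5, e6, e7, e8, e9]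
  have hm0 : m ≠ 0 := by
    intro hm
    apply hb0
    intro i
    have h := hbi i
    rw [hm] at h
    simpa using h.symm
  have hmlen : m < witList.length := by rw [witList_length]; exact hmlt
  obtain ⟨row, hmem⟩ : ∃ r : ℕ, (m, r) ∈ witList.zipIdx.map Prod.swap := by
    refine ⟨witList[m], ?_⟩
    have h := List.getElem_zipIdx (l := witList) (i := m) (j := 0) (by rwa [List.length_zipIdx])
    rw [Nat.zero_add] at h
    exact List.mem_map.mpr ⟨_, h ▸ List.getElem_mem _, rfl⟩
  have hcp : checkPair (m, row) = true := List.all_eq_true.mp keyL _ hmem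
  clear hmem
  simp only [checkPair, Bool.or_eq_true, beq_iff_eq, Bool.not_eq_true', Bool.and_eq_true,
    List.all_eq_true, decide_eq_true_eq, List.mem_range] at hcp
  have hqbl : qFL (fun i => ((m / 2^i) % 2 : ℕ)) = qF b := by
    simp only [qFL, qF]
    rw [e0, e1, e2, e3, e4, e5, e6, e7, e8, e9]
  rcases hcp with (hcp | hcp) | ⟨hall, hqu⟩
  · exact absurd hcp hm0
  · rw [hqbl] at hcp
    simp [h4] at hcp
  · refine ⟨fun i => ((((row / 16^(i.1)) % 16 : ℕ) : ℤ) - 8), ?_, ?_⟩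
    · intro i
      have ha := hall i.1 i.isLt
      rw [hbi i] at ha
      exact ha
    · have hqul : qFL (fun i => ((((row / 16^i) % 16 : ℕ) : ℤ) - 8)) =
          qF (fun i : Fin 10 => ((((row / 16^(i.1)) % 16 : ℕ) : ℤ) - 8)) := rfl
      rw [← hqul]
      exact hqu

end Glue

section Main

theorem cast_mem_E2 (w : Fin 10 → ℤ) : (fun i => (w i : ℚ)) ∈ E2lat := by
  have h : (fun i => (w i : ℚ)) = ∑ j : Fin 10, w j • (Pi.single j 1 : Fin 10 → ℚ) := by
    funext i
    rw [Finset.sum_apply]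
    simp [Pi.single_apply]
  rw [h]
  exact AddSubgroup.sum_mem _ fun j _ =>
    AddSubgroup.zsmul_mem _ (AddSubgroup.subset_closure (Set.mem_range_self j)) _

theorem BE2_expand (x y : Fin 10 → ℚ) :
    BE2 (x + y) (x + y) = BE2 x x + BE2 x y + BE2 y x + BE2 y y := by
  unfold BE2
  simp only [Pi.add_apply, ← Finset.sum_add_distrib]
  exact Finset.sum_congr rfl fun i _ => Finset.sum_congr rfl fun j _ => by ring

theorem BE2_symm (x y : Fin 10 → ℚ) : BE2 x y = BE2 y x := by
  unfold BE2
  rw [Finset.sum_comm]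
  exact Finset.sum_congr rfl fun i _ => Finset.sum_congr rfl fun j _ => by rw [Gsym]; ring

theorem BE2_smul (a b : ℚ) (x y : Fin 10 → ℚ) : BE2 (a • x) (b • y) = a * b * BE2 x y := by
  unfold BE2
  simp only [Pi.smul_apply, smul_eq_mul, Finset.mul_sum]
  exact Finset.sum_congr rfl fun i _ => Finset.sum_congr rfl fun j _ => by ring

theorem BE2_cast (u v : Fin 10 → ℤ) :
    BE2 (fun i => (u i : ℚ)) (fun i => (v i : ℚ)) = ((2 * qf2 u v : ℤ) : ℚ) := by
  unfold BE2 qf2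
  push_cast
  simp only [Finset.mul_sum]
  exact Finset.sum_congr rfl fun i _ => Finset.sum_congr rfl fun j _ => by ring

theorem BE2_single (x : Fin 10 → ℚ) (j : Fin 10) :
    BE2 x (fun k => ((if k = j then (1:ℤ) else 0 : ℤ) : ℚ))
      = ∑ k, x k * ((2 * E10Gram k j : ℤ) : ℚ) := by
  unfold BE2
  refine Finset.sum_congr rfl fun i _ => ?_
  rw [Finset.sum_eq_single j]
  · simp
  · intro l _ hl
    simp [hl]
  · intro h
    exact absurd (Finset.mem_univ j) h

theorem row_identity (x : Fin 10 → ℚ) (i : Fin 10) :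
    ∑ j, (Hmat i j : ℚ) * (∑ k, x k * ((2 * E10Gram k j : ℤ) : ℚ)) = 2 * x i := by
  calc ∑ j, (Hmat i j : ℚ) * (∑ k, x k * ((2 * E10Gram k j : ℤ) : ℚ))
      = ∑ j, ∑ k, x k * 2 * ((Hmat i j : ℚ) * (E10Gram k j : ℚ)) := by
        refine Finset.sum_congr rfl fun j _ => ?_
        rw [Finset.mul_sum]
        refine Finset.sum_congr rfl fun k _ => ?_
        push_cast
        ring
    _ = ∑ k, ∑ j, x k * 2 * ((Hmat i j : ℚ) * (E10Gram k j : ℚ)) := Finset.sum_comm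
    _ = ∑ k, x k * 2 * ((∑ j, Hmat i j * E10Gram j k : ℤ) : ℚ) := by
        refine Finset.sum_congr rfl fun k _ => ?_
        push_cast
        rw [Finset.mul_sum]
        refine Finset.sum_congr rfl fun j _ => ?_
        rw [Gsym k j]
        try ring
    _ = ∑ k, x k * 2 * ((if i = k then (1:ℤ) else 0 : ℤ) : ℚ) := by
        refine Finset.sum_congr rfl fun k _ => ?_
        rw [HG_inv i k]
    _ = 2 * x i := by
        simp [mul_ite, Finset.sum_ite_eq]
        try ring


/-- **Even overlattices of `E(2)`.** If `L` is a subgroup of `ℚ¹⁰` properly containing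
`E(2)` with finite quotient, on which the form `B` of `E(2)` is even integral on the
diagonal, then `L` is generated by `E(2)` together with its vectors of square `-2`. -/
theorem even_superlattice_of_E2_generated_by_roots
    (L : AddSubgroup (Fin 10 → ℚ)) (hEL : E2lat ≤ L) (hne : E2lat ≠ L)
    (hfin : Finite (L ⧸ E2lat.addSubgroupOf L))
    (heven : ∀ x ∈ L, ∃ n : ℤ, BE2 x x = 2 * (n : ℚ)) :
    L = AddSubgroup.closure
      ((E2lat : Set (Fin 10 → ℚ)) ∪ {x : Fin 10 → ℚ | x ∈ L ∧ BE2 x x = -2}) := by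
  have hback : AddSubgroup.closure
      ((E2lat : Set (Fin 10 → ℚ)) ∪ {x : Fin 10 → ℚ | x ∈ L ∧ BE2 x x = -2}) ≤ L := by
    rw [AddSubgroup.closure_le]
    rintro y (hy | hy)
    · exact hEL hy
    · exact hy.1
  refine le_antisymm ?_ hback
  intro x hx
  have hstd : ∀ j : Fin 10, (fun k => ((if k = j then (1:ℤ) else 0 : ℤ) : ℚ)) ∈ E2lat :=
    fun j => cast_mem_E2 _
  have hcoef : ∀ j : Fin 10,
      ∃ c : ℤ, BE2 x (fun k => ((if k = j then (1:ℤ) else 0 : ℤ) : ℚ)) = c := by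
    intro j
    set e : Fin 10 → ℚ := (fun k => ((if k = j then (1:ℤ) else 0 : ℤ) : ℚ)) with he
    obtain ⟨n1, hn1⟩ := heven (x + e) (add_mem hx (hEL (hstd j)))
    obtain ⟨n2, hn2⟩ := heven x hx
    obtain ⟨n3, hn3⟩ := heven e (hEL (hstd j))
    have hexp := BE2_expand x e
    have hsym := BE2_symm e x
    refine ⟨n1 - n2 - n3, ?_⟩
    push_cast
    linarith
  choose c hc using hcoef
  set w : Fin 10 → ℤ := fun i => ∑ j, Hmat i j * c j with hw
  have hwx : ∀ i, (w i : ℚ) = 2 * x i := by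
    intro i
    have hcast : (w i : ℚ) = ∑ j, (Hmat i j : ℚ) * (c j : ℚ) := by
      rw [hw]
      push_cast
      rfl
    rw [hcast]
    calc ∑ j, (Hmat i j : ℚ) * (c j : ℚ)
        = ∑ j, (Hmat i j : ℚ) * (∑ k, x k * ((2 * E10Gram k j : ℤ) : ℚ)) := by
          refine Finset.sum_congr rfl fun j _ => ?_
          rw [← hc j, BE2_single x j]
      _ = 2 * x i := row_identity x i
  obtain ⟨n, hn⟩ := heven x hx
  have hx2 : x = (2⁻¹ : ℚ) • (fun i => (w i : ℚ)) := by
    funext i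
    have := hwx i
    simp only [Pi.smul_apply, smul_eq_mul]
    linarith
  have hqw : qF w = 4 * n := by
    have h1 : BE2 x x = 2⁻¹ * 2⁻¹ * ((2 * qf2 w w : ℤ) : ℚ) := by
      conv_lhs => rw [hx2]
      rw [BE2_smul, BE2_cast]
    rw [hn] at h1
    have h2 : (qf2 w w : ℚ) = ((4 * n : ℤ) : ℚ) := by
      push_cast at h1 ⊢
      linarith
    have h3 : qf2 w w = 4 * n := by exact_mod_cast h2
    rw [← qf2_eval]
    exact h3
  by_cases hall : ∀ i, w i % 2 = 0
  · have hx3 : x = (fun i => ((w i / 2 : ℤ) : ℚ)) := by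
      funext i
      have h2 : (2:ℤ) * (w i / 2) = w i := by
        have := hall i
        omega
      have h3 : (2:ℚ) * ((w i / 2 : ℤ) : ℚ) = (w i : ℚ) := by exact_mod_cast h2
      have := hwx i
      linarith
    rw [hx3]
    exact AddSubgroup.subset_closure (Or.inl (cast_mem_E2 _))
  · push_neg at hall
    obtain ⟨i0, hi0⟩ := hall
    set b : Fin 10 → ℤ := fun i => w i % 2 with hbdef
    have hb : ∀ i, b i = 0 ∨ b i = 1 := fun i => Int.emod_two_eq (w i)
    have hb0 : ¬ ∀ i, b i = 0 := fun h => hi0 (h i0)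
    have hwb : ∀ i, w i = b i + 2 * (w i / 2) := by
      intro i
      have : b i = w i % 2 := rfl
      omega
    have h4 : qF b % 4 = 0 := by
      obtain ⟨X, hX⟩ : ∃ X : ℤ, qF w = qF b + 4 * X := by
        have hsub := qF_sub b fun i => w i / 2
        have hwfun : (fun i => b i + 2 * (w i / 2)) = w := (funext hwb).symm
        rw [hwfun] at hsub
        exact ⟨_, hsub⟩
      omega
    obtain ⟨u, hu1, hu2⟩ := key b hb hb0 h4
    set d : Fin 10 → ℤ := fun i => (w i - u i) / 2 with hddef
    have hd : ∀ i, w i = u i + 2 * d i := by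
      intro i
      have h1 := hu1 i
      have h2 : b i = w i % 2 := rfl
      have h3 : d i = (w i - u i) / 2 := rfl
      omega
    set r : Fin 10 → ℚ := (2⁻¹ : ℚ) • (fun i => (u i : ℚ)) with hrdef
    have hxr : x = r + (fun i => ((d i : ℤ) : ℚ)) := by
      funext i
      have h1 := hwx i
      have h2 : (w i : ℚ) = (u i : ℚ) + 2 * (d i : ℚ) := by exact_mod_cast hd i
      simp only [Pi.add_apply, hrdef, Pi.smul_apply, smul_eq_mul]
      linarith
    have hdE : (fun i => ((d i : ℤ) : ℚ)) ∈ E2lat := cast_mem_E2 d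
    have hrL : r ∈ L := by
      have hsub : r = x - (fun i => ((d i : ℤ) : ℚ)) := by
        rw [hxr, add_sub_cancel_right]
      rw [hsub]
      exact sub_mem hx (hEL hdE)
    have hBr : BE2 r r = -2 := by
      rw [hrdef, BE2_smul, BE2_cast, qf2_eval, hu2]
      norm_num
    rw [hxr]
    exact add_mem (AddSubgroup.subset_closure (Or.inr ⟨hrL, hBr⟩))
      (AddSubgroup.subset_closure (Or.inl hdE))


end Main
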